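/- Let G be a topological group, U ⊆ G open, V a Hausdorff topological space, and E a locally convex space. Set U^{[1]} := {(x,γ,t) ∈ U × 𝔏(G) × ℝ : x·γ(t) ∈ U}. A continuous map f : U × V → E is C^{1,0} if and only if there exists a continuous map f^{[1,0]} : U^{[1]} × V → E such that f^{[1,0]}(x,γ,t,y) = (1/t)(f(x·γ(t),y) − f(x,y)) for all (x,γ,t,y) ∈ U^{[1]} × V with t ≠ 0. In this case d^{(1,0)}f(x,y,γ) = f^{[1,0]}(x,γ,0,y) for all x ∈ U, y ∈ V, γ ∈ 𝔏(G). -/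

import Mathlib

open Filter Topology Set Pointwise

/-- The set of continuous one-parameter subgroups `γ : (ℝ,+) → G`, as a subtype of `C(ℝ, G)`
(hence endowed with the compact-open topology). -/
abbrev OneParam (G : Type*) [TopologicalSpace G] [Group G] : Type _ :=
  {γ : C(ℝ, G) // ∀ s t : ℝ, γ (s + t) = γ s * γ t}

/-- `D_γ f(x) = v`, i.e. `(1/t)(f(x·γ(t)) − f(x)) → v` as `t → 0`. -/
def HasDirDeriv {G E : Type*} [TopologicalSpace G] [Group G]
    [AddCommGroup E] [Module ℝ E] [TopologicalSpace E]
    (f : G → E) (x : G) (γ : OneParam G) (v : E) : Prop :=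
  Tendsto (fun t : ℝ => t⁻¹ • (f (x * γ.1 t) - f x)) (𝓝[≠] (0 : ℝ)) (𝓝 v)

/-- `U^{[1]} := {(x,γ,t) ∈ U × 𝔏(G) × ℝ : x·γ(t) ∈ U}`. -/
def sqBrOne {G : Type*} [TopologicalSpace G] [Group G] (U : Set G) :
    Set (G × OneParam G × ℝ) :=
  {p | p.1 ∈ U ∧ p.1 * p.2.1.1 p.2.2 ∈ U}

lemma OneParam.apply_zero {G : Type*} [TopologicalSpace G] [Group G] (γ : OneParam G) :
    γ.1 0 = 1 := by
  have h := γ.2 0 0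
  rw [add_zero] at h
  exact (mul_left_cancel (a := γ.1 0) (by rw [mul_one, ← h])).symm

lemma oneParam_eval_continuous {G : Type*} [TopologicalSpace G] [Group G] :
    Continuous fun q : OneParam G × ℝ => q.1.1 q.2 :=
  ContinuousEval.continuous_eval.comp (continuous_subtype_val.prodMap continuous_id)

lemma closure_subset_add' {E : Type*} [AddCommGroup E] [TopologicalSpace E]
    [IsTopologicalAddGroup E] (W V : Set E) (hV : V ∈ 𝓝 (0:E)) :
    closure W ⊆ W + V := by
  intro x hx
  have hN : {y : E | x - y ∈ V} ∈ 𝓝 x := by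
    have : ContinuousAt (fun y : E => x - y) x := (continuous_const.sub continuous_id).continuousAt
    have := this.preimage_mem_nhds (by simpa using hV)
    exact this
  obtain ⟨w, hw1, hw2⟩ := (mem_closure_iff_nhds.1 hx) _ hN
  exact ⟨w, hw2, x - w, hw1, by simp⟩

lemma exists_closed_convex_nhds {E : Type*} [AddCommGroup E] [Module ℝ E] [TopologicalSpace E]
    [IsTopologicalAddGroup E] [ContinuousSMul ℝ E] [LocallyConvexSpace ℝ E]
    {S : Set E} (hS : S ∈ 𝓝 (0:E)) :
    ∃ W ∈ 𝓝 (0:E), Convex ℝ W ∧ IsClosed W ∧ W ⊆ S := by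
  obtain ⟨V, hVo, hV0, hVS⟩ := exists_open_nhds_zero_add_subset hS
  have hVn : V ∈ 𝓝 (0:E) := hVo.mem_nhds hV0
  obtain ⟨W, ⟨hW, hWc⟩, hWV⟩ := (LocallyConvexSpace.convex_basis_zero ℝ E).mem_iff.1 hVn
  refine ⟨closure W, mem_of_superset hW subset_closure, hWc.closure, isClosed_closure, ?_⟩
  calc closure W ⊆ W + V := closure_subset_add' W V hVn
    _ ⊆ V + V := add_subset_add_right hWV
    _ ⊆ S := hVS

/-- Mean value theorem argument: a difference quotient lies in any closed convex set containing
the relevant directional derivatives. -/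
lemma mem_of_mvt {E : Type*} [AddCommGroup E] [Module ℝ E] [TopologicalSpace E]
    [IsTopologicalAddGroup E] [ContinuousSMul ℝ E] [LocallyConvexSpace ℝ E]
    (C : Set E) (hCc : Convex ℝ C) (hCcl : IsClosed C)
    (g : ℝ → E) (d : ℝ → E) (t : ℝ) (ht : t ≠ 0) (ε : ℝ) (hε : |t| < ε)
    (hderiv : ∀ s, |s| < ε → ∀ lam : E →L[ℝ] ℝ, HasDerivAt (fun u => lam (g u)) (lam (d s)) s)
    (hdC : ∀ s, |s| < ε → d s ∈ C) :
    t⁻¹ • (g t - g 0) ∈ C := by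
  by_contra h
  obtain ⟨lam, u, hlt, hgt⟩ := geometric_hahn_banach_closed_point hCc hCcl h
  rw [map_smul, map_sub, smul_eq_mul] at hgt
  have hsmall : ∀ s ∈ uIcc 0 t, |s| < ε := by
    intro s hs
    rcases le_total 0 t with h0 | h0
    · rw [uIcc_of_le h0] at hs
      rw [abs_lt]
      constructor <;> [linarith [hs.1, abs_nonneg t]; linarith [hs.2, le_abs_self t]]
    · rw [uIcc_of_ge h0] at hs
      rw [abs_lt]
      constructor <;> [linarith [hs.1, neg_abs_le t]; linarith [hs.2, abs_nonneg t]]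
  have hcont : ContinuousOn (fun s => lam (g s)) (uIcc 0 t) := fun s hs =>
    ((hderiv s (hsmall s hs) lam).continuousAt).continuousWithinAt
  rcases ht.lt_or_gt with h0 | h0
  · obtain ⟨c, hc, hceq⟩ := exists_hasDerivAt_eq_slope (fun s => lam (g s)) (fun s => lam (d s))
      h0 (by rwa [uIcc_of_ge h0.le] at hcont)
      (fun s hs => hderiv s (hsmall s (by rw [uIcc_of_ge h0.le]; exact Ioo_subset_Icc_self hs)) lam)
    have hcε : |c| < ε := hsmall c (by rw [uIcc_of_ge h0.le]; exact Ioo_subset_Icc_self hc)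
    have : lam (d c) = t⁻¹ * (lam (g t) - lam (g 0)) := by
      rw [hceq, zero_sub, div_neg, ← neg_div, neg_sub, div_eq_inv_mul]
    have := hlt _ (hdC c hcε)
    linarith [this, hgt]
  · obtain ⟨c, hc, hceq⟩ := exists_hasDerivAt_eq_slope (fun s => lam (g s)) (fun s => lam (d s))
      h0 (by rwa [uIcc_of_le h0.le] at hcont)
      (fun s hs => hderiv s (hsmall s (by rw [uIcc_of_le h0.le]; exact Ioo_subset_Icc_self hs)) lam)
    have hcε : |c| < ε := hsmall c (by rw [uIcc_of_le h0.le]; exact Ioo_subset_Icc_self hc)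
    have : lam (d c) = t⁻¹ * (lam (g t) - lam (g 0)) := by
      rw [hceq, sub_zero, div_eq_inv_mul]
    have := hlt _ (hdC c hcε)
    linarith [this, hgt]

lemma hasDerivAt_comp_curve {G E : Type*} [TopologicalSpace G] [Group G]
    [AddCommGroup E] [Module ℝ E] [TopologicalSpace E] [IsTopologicalAddGroup E]
    [ContinuousSMul ℝ E]
    (f : G → E) (γ : OneParam G) (x : G) (s : ℝ) (v : E)
    (h : HasDirDeriv f (x * γ.1 s) γ v) (lam : E →L[ℝ] ℝ) :
    HasDerivAt (fun u => lam (f (x * γ.1 u))) (lam v) s := by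
  rw [hasDerivAt_iff_tendsto_slope_zero]
  have : Tendsto (fun t : ℝ => lam (t⁻¹ • (f (x * γ.1 s * γ.1 t) - f (x * γ.1 s))))
      (𝓝[≠] (0:ℝ)) (𝓝 (lam v)) := (lam.continuous.tendsto v).comp h
  refine this.congr fun t => ?_
  rw [map_smul, map_sub, smul_eq_mul, smul_eq_mul, γ.2, mul_assoc]

/-- The "in this case" statement, as a standalone lemma. -/
theorem hasDirDeriv_of_sqBrOneMap
    {G X E : Type*} [Group G] [TopologicalSpace G] [IsTopologicalGroup G]
    [TopologicalSpace X]
    [AddCommGroup E] [Module ℝ E] [TopologicalSpace E]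
    (U : Set G) (hU : IsOpen U) (f : G → X → E)
    (F : G × OneParam G × ℝ → X → E)
    (hFc : ContinuousOn (fun q : (G × OneParam G × ℝ) × X => F q.1 q.2)
        (sqBrOne U ×ˢ (univ : Set X)))
    (hFeq : ∀ p ∈ sqBrOne U, p.2.2 ≠ 0 → ∀ y : X,
        F p y = (p.2.2)⁻¹ • (f (p.1 * p.2.1.1 p.2.2) y - f p.1 y))
    (x : G) (hx : x ∈ U) (y : X) (γ : OneParam G) :
    HasDirDeriv (fun x' => f x' y) x γ (F (x, γ, 0) y) := by
  set s0 : Set ℝ := {t : ℝ | x * γ.1 t ∈ U} with hs0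
  have hs0open : IsOpen s0 := hU.preimage (continuous_const.mul (map_continuous γ.1))
  have h00 : (0:ℝ) ∈ s0 := by simp [hs0, OneParam.apply_zero, hx]
  have hmem : ((x, γ, (0:ℝ)), y) ∈ sqBrOne U ×ˢ (univ : Set X) :=
    ⟨⟨hx, by simpa [OneParam.apply_zero] using hx⟩, trivial⟩
  have hcw : ContinuousWithinAt (fun q : (G × OneParam G × ℝ) × X => F q.1 q.2)
      (sqBrOne U ×ˢ (univ : Set X)) ((x, γ, 0), y) := hFc _ hmem
  have hmap : Tendsto (fun t : ℝ => (((x, γ, t), y) : (G × OneParam G × ℝ) × X))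
      (𝓝[s0] 0) (𝓝[sqBrOne U ×ˢ (univ : Set X)] ((x, γ, 0), y)) := by
    rw [tendsto_nhdsWithin_iff]
    constructor
    · apply Tendsto.mono_left _ nhdsWithin_le_nhds
      exact Continuous.tendsto (by fun_prop) 0
    · filter_upwards [self_mem_nhdsWithin] with t ht
      exact ⟨⟨hx, ht⟩, trivial⟩
  have hT : Tendsto (fun t : ℝ => F (x, γ, t) y) (𝓝[s0] 0) (𝓝 (F (x, γ, 0) y)) :=
    hcw.tendsto.comp hmap
  have hrestr : 𝓝[≠] (0:ℝ) = 𝓝[{(0:ℝ)}ᶜ ∩ s0] 0 :=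
    nhdsWithin_restrict' _ (hs0open.mem_nhds h00)
  rw [HasDirDeriv, hrestr]
  have hT' : Tendsto (fun t : ℝ => F (x, γ, t) y) (𝓝[{(0:ℝ)}ᶜ ∩ s0] 0) (𝓝 (F (x, γ, 0) y)) :=
    hT.mono_left (nhdsWithin_mono _ inter_subset_right)
  refine hT'.congr' ?_
  filter_upwards [self_mem_nhdsWithin] with t ht
  exact (hFeq (x, γ, t) ⟨hx, ht.2⟩ ht.1 y)

/-- A continuous map `f : U × V → E` (with `V` a Hausdorff topological space)
is `C^{1,0}` if and only if there is a continuous map `f^{[1,0]} : U^{[1]} × V → E` with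
`f^{[1,0]}(x,γ,t,y) = (1/t)(f(x·γ(t),y) − f(x,y))` for `t ≠ 0`; in this case
`d^{(1,0)}f(x,y,γ) = f^{[1,0]}(x,γ,0,y)`. -/
theorem isC10_iff_exists_sqBrOneMap
    {G X E : Type*} [Group G] [TopologicalSpace G] [IsTopologicalGroup G]
    [TopologicalSpace X] [T2Space X]
    [AddCommGroup E] [Module ℝ E] [TopologicalSpace E] [IsTopologicalAddGroup E]
    [ContinuousSMul ℝ E] [LocallyConvexSpace ℝ E] [T2Space E]
    (U : Set G) (hU : IsOpen U) (f : G → X → E)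
    (hf : ContinuousOn (fun p : G × X => f p.1 p.2) (U ×ˢ (univ : Set X))) :
    ((∃ d10 : G → X → OneParam G → E,
        (∀ x ∈ U, ∀ (y : X) (γ : OneParam G),
          HasDirDeriv (fun x' => f x' y) x γ (d10 x y γ)) ∧
        ContinuousOn (fun p : G × X × OneParam G => d10 p.1 p.2.1 p.2.2)
          (U ×ˢ (univ : Set (X × OneParam G)))) ↔
      (∃ F : G × OneParam G × ℝ → X → E,
        ContinuousOn (fun q : (G × OneParam G × ℝ) × X => F q.1 q.2)
          (sqBrOne U ×ˢ (univ : Set X)) ∧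
        ∀ p ∈ sqBrOne U, p.2.2 ≠ 0 → ∀ y : X,
          F p y = (p.2.2)⁻¹ • (f (p.1 * p.2.1.1 p.2.2) y - f p.1 y))) ∧
    (∀ F : G × OneParam G × ℝ → X → E,
      ContinuousOn (fun q : (G × OneParam G × ℝ) × X => F q.1 q.2)
        (sqBrOne U ×ˢ (univ : Set X)) →
      (∀ p ∈ sqBrOne U, p.2.2 ≠ 0 → ∀ y : X,
        F p y = (p.2.2)⁻¹ • (f (p.1 * p.2.1.1 p.2.2) y - f p.1 y)) →
      ∀ x ∈ U, ∀ (y : X) (γ : OneParam G),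
        HasDirDeriv (fun x' => f x' y) x γ (F (x, γ, 0) y)) := by
  classical
  constructor
  · constructor
    · -- forward (hard) direction
      rintro ⟨d10, hder, hd10c⟩
      set F : G × OneParam G × ℝ → X → E := fun p y =>
        if p.2.2 = 0 then d10 p.1 y p.2.1
        else (p.2.2)⁻¹ • (f (p.1 * p.2.1.1 p.2.2) y - f p.1 y) with hFdef
      refine ⟨F, ?_, ?_⟩
      · -- continuity of F
        rintro ⟨⟨x, γ, t⟩, y⟩ ⟨⟨hxU, hxtU⟩, -⟩
        by_cases ht : t = 0
        · subst ht
          apply ContinuousAt.continuousWithinAt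
          set v := d10 x y γ with hv
          have hFval : F (x, γ, 0) y = v := if_pos rfl
          rw [ContinuousAt]
          simp only [hFval]
          rw [tendsto_def]
          intro S hS
          -- closed convex neighborhood
          have hS0 : (fun w : E => v + w) ⁻¹' S ∈ 𝓝 (0:E) := by
            have hc : ContinuousAt (fun w : E => v + w) 0 := by fun_prop
            apply hc.preimage_mem_nhds
            simpa using hS
          obtain ⟨W, hW0, hWc, hWcl, hWS⟩ := exists_closed_convex_nhds hS0
          set C : Set E := {e | e - v ∈ W} with hC
          have hCS : C ⊆ S := by
            intro e he
            have := hWS he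
            simpa using this
          have hCcl : IsClosed C := hWcl.preimage (continuous_id.sub continuous_const)
          have hCconv : Convex ℝ C := by
            intro a ha b hb a' b' ha' hb' hab
            show a' • a + b' • b - v ∈ W
            have hvv : v = a' • v + b' • v := by rw [← add_smul, hab, one_smul]
            have heq : a' • a + b' • b - v = a' • (a - v) + b' • (b - v) := by
              rw [smul_sub, smul_sub]
              nth_rewrite 1 [hvv]
              abel
            rw [heq]
            exact hWc ha hb ha' hb' hab
          have hCnhds : C ∈ 𝓝 v := by
            have hc : ContinuousAt (fun e : E => e - v) v := by fun_prop
            have := hc.preimage_mem_nhds (by simpa using hW0)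
            exact this
          -- neighborhood on which d10 lands in C
          have hcw : ContinuousWithinAt
              (fun p : G × X × OneParam G => d10 p.1 p.2.1 p.2.2)
              (U ×ˢ (univ : Set (X × OneParam G))) (x, y, γ) := hd10c (x, y, γ) ⟨hxU, trivial⟩
          have hpre : {p : G × X × OneParam G | d10 p.1 p.2.1 p.2.2 ∈ C} ∈
              𝓝[U ×ˢ (univ : Set (X × OneParam G))] (x, y, γ) := hcw hCnhds
          obtain ⟨O, hOopen, hOmem, hOsub⟩ := mem_nhdsWithin.1 hpre
          -- box neighborhood via the curve map
          set Ψ : G × X × OneParam G × ℝ → G × X × OneParam G :=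
            fun r => (r.1 * r.2.2.1.1 r.2.2.2, r.2.1, r.2.2.1) with hΨ
          have hΨcont : Continuous Ψ := by
            refine Continuous.prodMk ?_ (Continuous.prodMk (by fun_prop) (by fun_prop))
            exact continuous_fst.mul
              (oneParam_eval_continuous.comp (by fun_prop))
          have hΨ0 : Ψ (x, y, γ, 0) ∈ O ∩ (U ×ˢ (univ : Set (X × OneParam G))) := by
            simp only [hΨ, OneParam.apply_zero, mul_one]
            exact ⟨hOmem, hxU, trivial⟩
          have hbox : Ψ ⁻¹' (O ∩ (U ×ˢ (univ : Set (X × OneParam G)))) ∈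
              𝓝 ((x, y, γ, 0) : G × X × OneParam G × ℝ) :=
            hΨcont.continuousAt.preimage_mem_nhds
              ((hOopen.inter (hU.prod isOpen_univ)).mem_nhds hΨ0)
          obtain ⟨A, hA, R1, hR1, hAR1⟩ := mem_prod_iff.1 (by rwa [nhds_prod_eq] at hbox)
          obtain ⟨B, hB, R2, hR2, hBR2⟩ := mem_prod_iff.1 (by rwa [nhds_prod_eq] at hR1)
          obtain ⟨Cg, hCg, I, hI, hCgI⟩ := mem_prod_iff.1 (by rwa [nhds_prod_eq] at hR2)
          obtain ⟨ε, hε, hball⟩ := Metric.mem_nhds_iff.1 hI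
          have key : ∀ x' ∈ A, ∀ y' ∈ B, ∀ γ' ∈ Cg, ∀ s : ℝ, |s| < ε →
              x' * γ'.1 s ∈ U ∧ d10 (x' * γ'.1 s) y' γ' ∈ C := by
            intro x' hx' y' hy' γ' hγ' s hsε
            have hsI : s ∈ I := hball (by simpa [Real.dist_eq] using hsε)
            have hmem2 : ((x', y', γ', s) : G × X × OneParam G × ℝ) ∈
                Ψ ⁻¹' (O ∩ (U ×ˢ (univ : Set (X × OneParam G)))) :=
              hAR1 ⟨hx', hBR2 ⟨hy', hCgI ⟨hγ', hsI⟩⟩⟩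
            exact ⟨hmem2.2.1, hOsub ⟨hmem2.1, hmem2.2⟩⟩
          -- final neighborhood
          have hball0 : {t : ℝ | |t| < ε} ∈ 𝓝 (0:ℝ) := by
            have := Metric.ball_mem_nhds (0:ℝ) hε
            simpa [Metric.ball, Real.dist_eq] using this
          refine mem_of_superset
            (prod_mem_nhds (prod_mem_nhds hA (prod_mem_nhds hCg hball0)) hB) ?_
          rintro ⟨⟨x', γ', t'⟩, y'⟩ ⟨⟨hx', hγ', ht'ε⟩, hy'⟩
          show F (x', γ', t') y' ∈ S
          by_cases ht' : t' = 0
          · subst ht'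
            have k := (key x' hx' y' hy' γ' hγ' 0 (by simpa using hε)).2
            rw [OneParam.apply_zero, mul_one] at k
            have : F (x', γ', 0) y' = d10 x' y' γ' := if_pos rfl
            rw [this]
            exact hCS k
          · have hUmem : ∀ s : ℝ, |s| < ε → x' * γ'.1 s ∈ U := fun s hs =>
              (key x' hx' y' hy' γ' hγ' s hs).1
            have hmvt := mem_of_mvt C hCconv hCcl
              (fun s => f (x' * γ'.1 s) y') (fun s => d10 (x' * γ'.1 s) y' γ')
              t' ht' ε ht'ε
              (fun s hs lam => hasDerivAt_comp_curve (fun z => f z y') γ' x' s _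
                (hder _ (hUmem s hs) y' γ') lam)
              (fun s hs => (key x' hx' y' hy' γ' hγ' s hs).2)
            have hF' : F (x', γ', t') y' =
                t'⁻¹ • (f (x' * γ'.1 t') y' - f x' y') := if_neg ht'
            rw [hF']
            apply hCS
            simpa [OneParam.apply_zero] using hmvt
        · -- t ≠ 0 : continuity from continuity of f
          have hTnhds : {q : (G × OneParam G × ℝ) × X | q.1.2.2 ≠ 0} ∈
              𝓝 (((x, γ, t), y) : (G × OneParam G × ℝ) × X) := by
            have hopen : IsOpen {q : (G × OneParam G × ℝ) × X | q.1.2.2 ≠ 0} :=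
              isOpen_compl_singleton.preimage (by fun_prop)
            exact hopen.mem_nhds ht
          rw [← continuousWithinAt_inter hTnhds]
          have hQ : ContinuousWithinAt
              (fun q : (G × OneParam G × ℝ) × X =>
                (q.1.2.2)⁻¹ • (f (q.1.1 * q.1.2.1.1 q.1.2.2) q.2 - f q.1.1 q.2))
              ((sqBrOne U ×ˢ (univ : Set X)) ∩ {q | q.1.2.2 ≠ 0}) ((x, γ, t), y) := by
            have hinv : ContinuousWithinAt (fun q : (G × OneParam G × ℝ) × X => (q.1.2.2)⁻¹)
                ((sqBrOne U ×ˢ (univ : Set X)) ∩ {q | q.1.2.2 ≠ 0}) ((x, γ, t), y) :=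
              ((continuousAt_inv₀ ht).comp (by fun_prop : Continuous
                fun q : (G × OneParam G × ℝ) × X => q.1.2.2).continuousAt).continuousWithinAt
            have hmaps1 : MapsTo (fun q : (G × OneParam G × ℝ) × X =>
                ((q.1.1 * q.1.2.1.1 q.1.2.2 : G), q.2))
                ((sqBrOne U ×ˢ (univ : Set X)) ∩ {q | q.1.2.2 ≠ 0}) (U ×ˢ (univ : Set X)) :=
              fun q hq => ⟨hq.1.1.2, trivial⟩
            have hmaps2 : MapsTo (fun q : (G × OneParam G × ℝ) × X => (q.1.1, q.2))
                ((sqBrOne U ×ˢ (univ : Set X)) ∩ {q | q.1.2.2 ≠ 0}) (U ×ˢ (univ : Set X)) :=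
              fun q hq => ⟨hq.1.1.1, trivial⟩
            have hc1 : Continuous (fun q : (G × OneParam G × ℝ) × X =>
                ((q.1.1 * q.1.2.1.1 q.1.2.2 : G), q.2)) := by
              refine Continuous.prodMk ?_ continuous_snd
              exact (continuous_fst.fst).mul (oneParam_eval_continuous.comp (by fun_prop))
            have h1 : ContinuousWithinAt (fun q : (G × OneParam G × ℝ) × X =>
                f (q.1.1 * q.1.2.1.1 q.1.2.2) q.2)
                ((sqBrOne U ×ˢ (univ : Set X)) ∩ {q | q.1.2.2 ≠ 0}) ((x, γ, t), y) :=
              (hf _ ⟨hxtU, trivial⟩).comp hc1.continuousWithinAt hmaps1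
            have h2 : ContinuousWithinAt (fun q : (G × OneParam G × ℝ) × X => f q.1.1 q.2)
                ((sqBrOne U ×ˢ (univ : Set X)) ∩ {q | q.1.2.2 ≠ 0}) ((x, γ, t), y) :=
              (hf _ ⟨hxU, trivial⟩).comp
                (by fun_prop : Continuous (fun q : (G × OneParam G × ℝ) × X =>
                  (q.1.1, q.2))).continuousWithinAt hmaps2
            exact hinv.smul (h1.sub h2)
          refine hQ.congr ?_ ?_
          · rintro ⟨⟨x', γ', t'⟩, y'⟩ ⟨-, ht'⟩
            exact if_neg ht'
          · exact if_neg ht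
      · -- the defining identity
        intro p hp hpt y
        exact if_neg hpt
    · -- converse direction
      rintro ⟨F, hFc, hFeq⟩
      refine ⟨fun x y γ => F (x, γ, 0) y, ?_, ?_⟩
      · exact fun x hx y γ => hasDirDeriv_of_sqBrOneMap U hU f F hFc hFeq x hx y γ
      · have hmaps : MapsTo (fun p : G × X × OneParam G =>
            ((((p.1, p.2.2, 0) : G × OneParam G × ℝ), p.2.1) : (G × OneParam G × ℝ) × X))
            (U ×ˢ (univ : Set (X × OneParam G))) (sqBrOne U ×ˢ (univ : Set X)) := by
          intro p hp
          exact ⟨⟨hp.1, by simpa [OneParam.apply_zero] using hp.1⟩, trivial⟩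
        have hc : Continuous (fun p : G × X × OneParam G =>
            ((((p.1, p.2.2, 0) : G × OneParam G × ℝ), p.2.1) : (G × OneParam G × ℝ) × X)) := by
          fun_prop
        exact hFc.comp hc.continuousOn hmaps
  · exact fun F hFc hFeq x hx y γ => hasDirDeriv_of_sqBrOneMap U hU f F hFc hFeq x hx y γ
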